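/- Suppose the measurable classifier ĥ : X → {+1, −1, ⊥} enjoys proper abstention, i.e., {x ∈ X : ĥ(x) = ⊥} ⊆ X_γ := {x ∈ X : |η(x) − 1/2| ≤ γ}. Then the randomized version č satisfies err(č) − err(h⋆) ≤ (err_γ(ĥ) − err(h⋆)) + γ·P_{x∼D_X}(x ∈ X_γ). -/

import Mathlib

open MeasureTheory

/-- **Proper abstention.** If the measurable classifier `h : X → {+1, -1, ⊥}`
(encoded as `Option Bool`) abstains only on `X_γ = {x | |η x - 1/2| ≤ γ}`, then the
randomized version `č` satisfies
`err(č) - err(h⋆) ≤ (err_γ(h) - err(h⋆)) + γ·P_{x∼D_X}(x ∈ X_γ)`. -/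
theorem stmt_3 {X : Type*} [MeasurableSpace X] (μ : Measure X) [IsProbabilityMeasure μ]
    (η : X → ℝ) (hη : Measurable η) (hη01 : ∀ x, η x ∈ Set.Icc (0 : ℝ) 1)
    (h : X → Option Bool)
    (hnone : MeasurableSet {x | h x = none})
    (htrue : MeasurableSet {x | h x = some true})
    (γ : ℝ) (hγ0 : 0 < γ) (hγ : γ < 1 / 2)
    (hproper : {x | h x = none} ⊆ {x | |η x - 1 / 2| ≤ γ}) :
    (∫ x, (h x).elim (1 / 2 : ℝ) (fun b => if b then 1 - η x else η x) ∂μ)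
        - (∫ x, min (η x) (1 - η x) ∂μ)
      ≤ ((∫ x, (h x).elim (1 / 2 - γ) (fun b => if b then 1 - η x else η x) ∂μ)
            - (∫ x, min (η x) (1 - η x) ∂μ))
        + γ * (μ {x | |η x - 1 / 2| ≤ γ}).toReal := by
  classical
  set f : X → ℝ := fun x => (h x).elim (1 / 2 : ℝ) (fun b => if b then 1 - η x else η x)
    with hfdef
  set g : X → ℝ := fun x => (h x).elim (1 / 2 - γ) (fun b => if b then 1 - η x else η x)
    with hgdef
  -- measurability via piecewise descriptions
  have hfeq : f = Set.piecewise {x | h x = none} (fun _ => (1 / 2 : ℝ))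
      (Set.piecewise {x | h x = some true} (fun x => 1 - η x) η) := by
    funext x
    rcases hx : h x with _ | b
    · simp [hfdef, Set.piecewise, Set.mem_setOf_eq, hx]
    · cases b <;> simp [hfdef, Set.piecewise, Set.mem_setOf_eq, hx]
  have hgeq : g = Set.piecewise {x | h x = none} (fun _ => (1 / 2 - γ : ℝ))
      (Set.piecewise {x | h x = some true} (fun x => 1 - η x) η) := by
    funext x
    rcases hx : h x with _ | b
    · simp [hgdef, Set.piecewise, Set.mem_setOf_eq, hx]
    · cases b <;> simp [hgdef, Set.piecewise, Set.mem_setOf_eq, hx]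
  have hinner : Measurable (Set.piecewise {x | h x = some true} (fun x => 1 - η x) η) :=
    Measurable.piecewise htrue (measurable_const.sub hη) hη
  have hfm : Measurable f := by
    rw [hfeq]; exact Measurable.piecewise hnone measurable_const hinner
  have hgm : Measurable g := by
    rw [hgeq]; exact Measurable.piecewise hnone measurable_const hinner
  have hbound : ∀ (x : X) (b : Bool), |if b then 1 - η x else η x| ≤ 1 := by
    intro x b
    have h1 := (hη01 x).1
    have h2 := (hη01 x).2
    cases b <;> simp <;> rw [abs_le] <;> constructor <;> linarith
  have hfi : Integrable f μ := by
    refine (integrable_const (1 : ℝ)).mono' hfm.aestronglyMeasurable ?_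
    filter_upwards with x
    rcases hx : h x with _ | b
    · simp [hfdef, hx]; norm_num
    · simpa [hfdef, hx] using hbound x b
  have hgi : Integrable g μ := by
    refine (integrable_const (1 : ℝ)).mono' hgm.aestronglyMeasurable ?_
    filter_upwards with x
    rcases hx : h x with _ | b
    · simp only [hgdef, hx, Option.elim]
      rw [Real.norm_eq_abs, abs_le]; constructor <;> linarith
    · simpa [hgdef, hx] using hbound x b
  -- difference of integrals
  have hdiff : (fun x => f x - g x)
      = Set.indicator {x | h x = none} (fun _ => γ) := by
    funext x
    rcases hx : h x with _ | b
    · simp [hfdef, hgdef, Set.indicator, Set.mem_setOf_eq, hx]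
    · simp [hfdef, hgdef, Set.indicator, Set.mem_setOf_eq, hx]
  have hint : ∫ x, f x ∂μ - ∫ x, g x ∂μ = γ * (μ {x | h x = none}).toReal := by
    rw [← integral_sub hfi hgi, hdiff, integral_indicator_const _ hnone]
    simp [mul_comm, Measure.real]
  have hmono : (μ {x | h x = none}).toReal ≤ (μ {x | |η x - 1 / 2| ≤ γ}).toReal :=
    ENNReal.toReal_mono (measure_ne_top μ _) (measure_mono hproper)
  have : ∫ x, f x ∂μ - ∫ x, g x ∂μ ≤ γ * (μ {x | |η x - 1 / 2| ≤ γ}).toReal := by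
    rw [hint]
    exact mul_le_mul_of_nonneg_left hmono hγ0.le
  linarith
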